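/- Let a > 0, and let (a_i)_{i∈ℕ} be a square-summable real sequence and (μ_i)_{i∈ℕ} real numbers with |2μ_i − 2a| ≥ a for all i, with all the sums below finite. Define N(t)² = Σ_i a_i² e^{2μ_i t}. Then (1/2)(N(0)² + e^{−4a} N(2)²) ≥ cosh(a) · e^{−2a} · N(1)². -/
import Mathlib

theorem stmt_13 (a : ℝ) (ha : 0 < a) (c μ : ℕ → ℝ)
    (hμ : ∀ i, a ≤ |2 * μ i - 2 * a|)
    (hsum : ∀ t ∈ ({0, 1, 2} : Set ℝ),
      Summable fun i => c i ^ 2 * Real.exp (2 * μ i * t)) :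
    (1 / 2) * ((∑' i, c i ^ 2 * Real.exp (2 * μ i * 0)) +
        Real.exp (-4 * a) * ∑' i, c i ^ 2 * Real.exp (2 * μ i * 2)) ≥
      Real.cosh a * Real.exp (-2 * a) *
        ∑' i, c i ^ 2 * Real.exp (2 * μ i * 1) := by
  have h0 := hsum 0 (by simp)
  have h2 := hsum 2 (by simp)
  have h1 := hsum 1 (by simp)
  rw [ge_iff_le, ← tsum_mul_left, ← tsum_mul_left (a := Real.exp (-4 * a)),
    ← Summable.tsum_add h0 (h2.mul_left _), ← tsum_mul_left]
  refine Summable.tsum_le_tsum (fun i => ?_) (h1.mul_left _) ((h0.add (h2.mul_left _)).mul_left _)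
  have key : Real.cosh a ≤ Real.cosh (2 * μ i - 2 * a) := by
    rw [Real.cosh_le_cosh, abs_of_pos ha]; exact hμ i
  have hc : (0:ℝ) ≤ c i ^ 2 * Real.exp (2 * μ i - 2 * a) :=
    mul_nonneg (sq_nonneg _) (Real.exp_pos _).le
  calc Real.cosh a * Real.exp (-2 * a) * (c i ^ 2 * Real.exp (2 * μ i * 1))
      = c i ^ 2 * Real.exp (2 * μ i - 2 * a) * Real.cosh a := by
        have h : Real.exp (-2 * a) * Real.exp (2 * μ i * 1) = Real.exp (2 * μ i - 2 * a) := by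
          rw [← Real.exp_add]; ring_nf
        linear_combination Real.cosh a * c i ^ 2 * h
    _ ≤ c i ^ 2 * Real.exp (2 * μ i - 2 * a) * Real.cosh (2 * μ i - 2 * a) :=
        mul_le_mul_of_nonneg_left key hc
    _ = 1 / 2 * (c i ^ 2 * Real.exp (2 * μ i * 0) +
          Real.exp (-4 * a) * (c i ^ 2 * Real.exp (2 * μ i * 2))) := by
        have h1 : Real.exp (2 * μ i - 2 * a) * Real.exp (2 * μ i - 2 * a) = Real.exp (-4 * a) * Real.exp (2 * μ i * 2) := by
          rw [← Real.exp_add, ← Real.exp_add]; ring_nf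
        have h2 : Real.exp (2 * μ i - 2 * a) * Real.exp (-(2 * μ i - 2 * a)) = Real.exp (2 * μ i * 0) := by
          rw [← Real.exp_add]; ring_nf
        rw [Real.cosh_eq]
        linear_combination (c i ^ 2 / 2) * h1 + (c i ^ 2 / 2) * h2
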